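/- Let G be a compact Hausdorff topological group with Haar probability measure μ, and let N be an open normal subgroup of G. Then N has finite index in G, and the product measure μ × μ of the set {(x,y) ∈ G × G : x·y·x⁻¹·y⁻¹ ∈ N} equals cc(G/N) / [G : N], where cc(G/N) is the number of conjugacy classes of the finite quotient group G/N. -/

import Mathlib

open MeasureTheory

/-- For a compact group `G` with Haar probability measure `μ` and an open normal subgroup `N`,
`N` has finite index and `(μ×μ){(x,y) : [x,y] ∈ N} = cc(G/N) / [G:N]`. -/
theorem haar_measure_commuting_pairs (G : Type*) [Group G] [TopologicalSpace G]
    [IsTopologicalGroup G] [CompactSpace G] [T2Space G] [MeasurableSpace G] [BorelSpace G]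
    (μ : Measure G) [μ.IsHaarMeasure] [IsProbabilityMeasure μ]
    (N : Subgroup G) [N.Normal] (hN : IsOpen (N : Set G)) :
    N.FiniteIndex ∧
      (μ.prod μ) {q : G × G | q.1 * q.2 * q.1⁻¹ * q.2⁻¹ ∈ N} =
        (Nat.card (ConjClasses (G ⧸ N)) : ENNReal) / (N.index : ENNReal) := by
  classical
  have hfin : Finite (G ⧸ N) := N.quotient_finite_of_isOpen hN
  have hFI : N.FiniteIndex := N.finiteIndex_of_finite_quotient
  refine ⟨hFI, ?_⟩
  set Q := G ⧸ N
  letI : Fintype Q := Fintype.ofFinite Q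
  set A : Q → Set G := fun a => QuotientGroup.mk ⁻¹' {a} with hAdef
  -- cosets as translates of N
  have hA : ∀ g : G, A (QuotientGroup.mk g) = (fun x => g⁻¹ * x) ⁻¹' (N : Set G) := by
    intro g
    ext x
    simp only [hAdef, Set.mem_preimage, Set.mem_singleton_iff, SetLike.mem_coe]
    rw [QuotientGroup.eq]
    constructor
    · intro h; simpa [mul_inv_rev] using N.inv_mem h
    · intro h; simpa [mul_inv_rev] using N.inv_mem h
  have hNmeas : MeasurableSet (N : Set G) := hN.measurableSet
  have hAmeas : ∀ a : Q, MeasurableSet (A a) := by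
    intro a
    induction a using Quotient.ind with
    | _ g => rw [show (Quotient.mk _ g : Q) = QuotientGroup.mk g from rfl, hA g]
             exact hNmeas.preimage (measurable_const_mul g⁻¹)
  have hAval : ∀ a : Q, μ (A a) = μ (N : Set G) := by
    intro a
    induction a using Quotient.ind with
    | _ g => rw [show (Quotient.mk _ g : Q) = QuotientGroup.mk g from rfl, hA g]
             exact measure_preimage_mul μ g⁻¹ _
  have hdisj : Pairwise (Function.onFun Disjoint A) := by
    intro a b hab
    refine Set.disjoint_left.mpr ?_
    intro x hxa hxb
    exact hab (hxa.symm.trans hxb)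
  have hUnion : ⋃ a, A a = Set.univ := by
    ext x; simp only [Set.mem_iUnion, Set.mem_univ, iff_true]
    exact ⟨QuotientGroup.mk x, rfl⟩
  have hn0 : (N.index : ENNReal) ≠ 0 := by
    exact_mod_cast Nat.cast_ne_zero.mpr hFI.index_ne_zero
  have hntop : (N.index : ENNReal) ≠ ⊤ := ENNReal.natCast_ne_top _
  have hcard : (Fintype.card Q : ENNReal) = (N.index : ENNReal) := by
    norm_cast
    rw [Subgroup.index, Nat.card_eq_fintype_card]
  have hsum : (N.index : ENNReal) * μ (N : Set G) = 1 := by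
    have h1 : μ (⋃ a, A a) = ∑' a : Q, μ (A a) := measure_iUnion hdisj hAmeas
    rw [hUnion, measure_univ] at h1
    rw [tsum_fintype] at h1
    simp only [hAval] at h1
    rw [Finset.sum_const, Finset.card_univ, nsmul_eq_mul] at h1
    rw [← hcard]
    exact h1.symm
  have hμN : μ (N : Set G) = (N.index : ENNReal)⁻¹ := by
    have := congrArg (fun x => (N.index : ENNReal)⁻¹ * x) hsum
    simpa [← mul_assoc, ENNReal.inv_mul_cancel hn0 hntop] using this
  -- the commuting-pairs set as a finite disjoint union of products of cosets
  have hset : {q : G × G | q.1 * q.2 * q.1⁻¹ * q.2⁻¹ ∈ N}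
      = ⋃ p : {p : Q × Q // Commute p.1 p.2}, A p.1.1 ×ˢ A p.1.2 := by
    ext ⟨x, y⟩
    simp only [Set.mem_setOf_eq, Set.mem_iUnion, Set.mem_prod, hAdef, Set.mem_preimage,
      Set.mem_singleton_iff]
    constructor
    · intro h
      refine ⟨⟨((x : Q), (y : Q)), ?_⟩, rfl, rfl⟩
      rw [← commutatorElement_eq_one_iff_commute, commutatorElement_def]
      rw [show ((x : Q) * y * (x : Q)⁻¹ * (y : Q)⁻¹) = ((x * y * x⁻¹ * y⁻¹ : G) : Q) from rfl]
      rwa [QuotientGroup.eq_one_iff]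
    · rintro ⟨⟨⟨a, b⟩, hc⟩, hxa, hyb⟩
      simp only at hxa hyb
      subst hxa; subst hyb
      rw [← commutatorElement_eq_one_iff_commute, commutatorElement_def] at hc
      rw [show ((x : Q) * y * (x : Q)⁻¹ * (y : Q)⁻¹) = ((x * y * x⁻¹ * y⁻¹ : G) : Q) from rfl]
        at hc
      rwa [QuotientGroup.eq_one_iff] at hc
  have hdisj2 : Pairwise (Function.onFun Disjoint
      fun p : {p : Q × Q // Commute p.1 p.2} => A p.1.1 ×ˢ A p.1.2) := by
    intro p q hpq
    refine Set.disjoint_left.mpr ?_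
    rintro ⟨x, y⟩ ⟨hx1, hy1⟩ ⟨hx2, hy2⟩
    apply hpq
    apply Subtype.ext
    apply Prod.ext
    · exact hx1.symm.trans hx2
    · exact hy1.symm.trans hy2
  rw [hset, measure_iUnion hdisj2 (fun p => (hAmeas _).prod (hAmeas _))]
  have hval : ∀ p : {p : Q × Q // Commute p.1 p.2},
      (μ.prod μ) (A p.1.1 ×ˢ A p.1.2) = (N.index : ENNReal)⁻¹ * (N.index : ENNReal)⁻¹ := by
    intro p
    rw [Measure.prod_prod, hAval, hAval, hμN]
  rw [tsum_fintype]
  simp only [hval]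
  rw [Finset.sum_const, Finset.card_univ, nsmul_eq_mul]
  have hcc : (Fintype.card {p : Q × Q // Commute p.1 p.2} : ENNReal)
      = (Nat.card (ConjClasses Q) : ENNReal) * (N.index : ENNReal) := by
    norm_cast
    rw [← Nat.card_eq_fintype_card, card_comm_eq_card_conjClasses_mul_card,
      Subgroup.index, Nat.card_eq_fintype_card]
  rw [hcc, ENNReal.div_eq_inv_mul]
  rw [mul_assoc, ← mul_assoc (N.index : ENNReal), ENNReal.mul_inv_cancel hn0 hntop, one_mul,
    mul_comm]
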